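/- Residual-based upper bound on the model reduction error of the primal sensitivity: ‖du_h − du_r‖ ≤ Δ_dpr := α⁻¹ (‖da‖ Δ_pr + ‖r^{pr,d}(u_r, du_r)‖). -/
import Mathlib

lemma aux_div {α C x : ℝ} (hα : 0 < α) (hC : 0 ≤ C) (hx : 0 ≤ x)
    (h : α * x ^ 2 ≤ C * x) : x ≤ α⁻¹ * C := by
  rcases eq_or_lt_of_le hx with h0 | h0
  · rw [← h0]; positivity
  · rw [le_inv_mul_iff₀ hα]
    nlinarith

/-- Residual-based upper bound on the model reduction error of the primal sensitivity:
`‖du_h − du_r‖ ≤ Δ_dpr := α⁻¹ (‖da‖ Δ_pr + ‖r^{pr,d}(u_r, du_r)‖)`, where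
`r^{pr,d}(u, du)[v] := dl(v) − da(u, v) − a(du, v)`. -/
theorem stmt_15
    {V : Type*} [NormedAddCommGroup V] [InnerProductSpace ℝ V] [CompleteSpace V]
    (a : V →L[ℝ] V →L[ℝ] ℝ) (l : V →L[ℝ] ℝ)
    (α : ℝ) (hα : 0 < α)
    (ha_sym : ∀ v w : V, a v w = a w v)
    (ha_coer : ∀ v : V, α * ‖v‖ ^ 2 ≤ a v v)
    (u_h : V) (hu_h : ∀ v : V, a u_h v = l v)
    (Vpr : Submodule ℝ V) (hVpr : IsClosed (Vpr : Set V))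
    (u_r : V) (hu_r_mem : u_r ∈ Vpr) (hu_r : ∀ v ∈ Vpr, a u_r v = l v)
    (dl : V →L[ℝ] ℝ) (da : V →L[ℝ] V →L[ℝ] ℝ)
    (du_h : V) (hdu_h : ∀ v : V, a du_h v = dl v - da u_h v)
    (Wpr : Submodule ℝ V) (hWpr : IsClosed (Wpr : Set V))
    (du_r : V) (hdu_r_mem : du_r ∈ Wpr)
    (hdu_r : ∀ v ∈ Wpr, a du_r v = dl v - da u_r v) :
    ‖du_h - du_r‖ ≤
      α⁻¹ * (‖da‖ * (α⁻¹ * ‖l - a u_r‖) + ‖dl - da u_r - a du_r‖) := by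
  set p := u_h - u_r with hp
  set e := du_h - du_r with he
  -- bound on ‖p‖
  have hpb : ‖p‖ ≤ α⁻¹ * ‖l - a u_r‖ := by
    apply aux_div hα (by positivity) (norm_nonneg _)
    have h1 : a p p = (l - a u_r) p := by
      simp [hp, map_sub, hu_h]
    calc α * ‖p‖ ^ 2 ≤ a p p := ha_coer p
      _ = (l - a u_r) p := h1
      _ ≤ ‖l - a u_r‖ * ‖p‖ := le_trans (le_abs_self _) ((l - a u_r).le_opNorm p)
  -- bound on ‖e‖
  have heb : ‖e‖ ≤ α⁻¹ * (‖da‖ * ‖p‖ + ‖dl - da u_r - a du_r‖) := by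
    apply aux_div hα (by positivity) (norm_nonneg _)
    have h2 : a e e = (dl - da u_r - a du_r) e - da p e := by
      simp only [he, hp, map_sub, ContinuousLinearMap.sub_apply, hdu_h]
      ring
    have h3 : (dl - da u_r - a du_r) e ≤ ‖dl - da u_r - a du_r‖ * ‖e‖ :=
      le_trans (le_abs_self _) ((dl - da u_r - a du_r).le_opNorm e)
    have h4 : -(da p e) ≤ ‖da‖ * ‖p‖ * ‖e‖ := by
      have := neg_abs_le (da p e)
      have h5 : |da p e| ≤ ‖da‖ * ‖p‖ * ‖e‖ := da.le_opNorm₂ p e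
      linarith [abs_nonneg (da p e)]
    calc α * ‖e‖ ^ 2 ≤ a e e := ha_coer e
      _ = (dl - da u_r - a du_r) e - da p e := h2
      _ ≤ ‖dl - da u_r - a du_r‖ * ‖e‖ + ‖da‖ * ‖p‖ * ‖e‖ := by linarith
      _ = (‖da‖ * ‖p‖ + ‖dl - da u_r - a du_r‖) * ‖e‖ := by ring
  calc ‖e‖ ≤ α⁻¹ * (‖da‖ * ‖p‖ + ‖dl - da u_r - a du_r‖) := heb
    _ ≤ α⁻¹ * (‖da‖ * (α⁻¹ * ‖l - a u_r‖) + ‖dl - da u_r - a du_r‖) := by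
        gcongr
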